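/- For every nonnegative integer k and every integer r ≥ 1 there exist polynomials P_{k,0}(q), …, P_{k,rk}(q) with integer coefficients such that, in ℚ(q), for all nonnegative integers n: ([n+k,k])^r = Σ_{j=0}^{r·k} q^{(r·k-j)·n}·P_{k,j}(q)·[n+j,j]. -/

import Mathlib

/-- The $q$-factorial `(q)_n = (1-q)(1-q²)⋯(1-qⁿ)` in `ℚ(q) = RatFunc ℚ`. -/
noncomputable def qfac (n : ℕ) : RatFunc ℚ :=
  ∏ m ∈ Finset.range n, (1 - (RatFunc.X : RatFunc ℚ) ^ (m + 1))

/-- The Gaussian binomial coefficient `[n, k]` in `ℚ(q)`. -/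
noncomputable def qbinom (n k : ℕ) : RatFunc ℚ :=
  if k ≤ n then qfac n / (qfac k * qfac (n - k)) else 0

/-- The $q$-multinomial coefficient `Mq(j; i, k)` in `ℚ(q)`: it equals
`(q)_j/((q)_{j-i}(q)_{j-k}(q)_{i+k-j})` when `max i k ≤ j ≤ i + k`, and `0`
otherwise. -/
noncomputable def qmulti (j i k : ℕ) : RatFunc ℚ :=
  if i ≤ j ∧ k ≤ j ∧ j ≤ i + k then
    qfac j / (qfac (j - i) * qfac (j - k) * qfac (i + k - j))
  else 0

lemma qfac_succ (n : ℕ) : qfac (n+1) = qfac n * (1 - (RatFunc.X : RatFunc ℚ) ^ (n+1)) :=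
  Finset.prod_range_succ _ _

lemma one_sub_X_pow_ne_zero (m : ℕ) (hm : m ≠ 0) :
    (1 - (RatFunc.X : RatFunc ℚ) ^ m) ≠ 0 := by
  rw [sub_ne_zero]
  intro h
  have h2 : algebraMap (Polynomial ℚ) (RatFunc ℚ) 1 =
      algebraMap (Polynomial ℚ) (RatFunc ℚ) (Polynomial.X ^ m) := by
    rw [map_one, map_pow, RatFunc.algebraMap_X, ← h]
  have h3 := RatFunc.algebraMap_injective ℚ h2
  have := congrArg Polynomial.natDegree h3
  simp [Polynomial.natDegree_X_pow] at this
  exact hm this.symm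

lemma qfac_ne_zero (n : ℕ) : qfac n ≠ 0 := by
  induction n with
  | zero => simp [qfac]
  | succ n ih => rw [qfac_succ]; exact mul_ne_zero ih (one_sub_X_pow_ne_zero _ (Nat.succ_ne_zero n))

lemma qfac_zero : qfac 0 = 1 := rfl

lemma qbinom_zero (n : ℕ) : qbinom n 0 = 1 := by
  rw [qbinom, if_pos (Nat.zero_le n)]
  rw [qfac_zero, one_mul, Nat.sub_zero, div_self (qfac_ne_zero n)]

lemma qbinom_self (n : ℕ) : qbinom n n = 1 := by
  rw [qbinom, if_pos le_rfl, Nat.sub_self, qfac_zero, mul_one, div_self (qfac_ne_zero n)]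

lemma qbinom_eq_zero {n k : ℕ} (h : n < k) : qbinom n k = 0 := by
  rw [qbinom, if_neg (by omega)]

/-- Gaussian binomial as an integer polynomial. -/
noncomputable def gb : ℕ → ℕ → Polynomial ℤ
  | _, 0 => 1
  | 0, _+1 => 0
  | n+1, k+1 => gb n (k+1) * Polynomial.X^(k+1) + gb n k
  termination_by n k => n

lemma qbinom_pascal (n k : ℕ) :
    qbinom (n+1) (k+1) = (RatFunc.X : RatFunc ℚ)^(k+1) * qbinom n (k+1) + qbinom n k := by
  rcases lt_or_ge n (k+1) with h | h
  · rcases Nat.lt_or_ge n k with h2 | h2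
    · rw [qbinom_eq_zero (by omega), qbinom_eq_zero h2, qbinom_eq_zero (by omega)]; ring
    · have hnk : n = k := by omega
      subst hnk
      rw [qbinom_self, qbinom_eq_zero (by omega), qbinom_self]; ring
  · have e1 : n + 1 - (k+1) = n - k := by omega
    have e2 : n - (k+1) = n - k - 1 := by omega
    rw [qbinom, if_pos (by omega), qbinom, if_pos h, qbinom, if_pos (by omega), e1, e2]
    have hs1 : qfac (n+1) = qfac n * (1 - RatFunc.X^(n+1)) := qfac_succ n
    have hs2 : qfac (k+1) = qfac k * (1 - RatFunc.X^(k+1)) := qfac_succ k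
    have hs3 : qfac (n - k) = qfac (n - k - 1) * (1 - RatFunc.X^(n-k)) := by
      have : n - k = (n - k - 1) + 1 := by omega
      conv_lhs => rw [this, qfac_succ]
      have e3 : n - k - 1 + 1 = n - k := by omega
      rw [e3]
    have hx : (RatFunc.X : RatFunc ℚ)^(n+1) = RatFunc.X^(k+1) * RatFunc.X^(n-k) := by
      rw [← pow_add]; congr 1; omega
    rw [hs1, hs2, hs3, hx]
    have h1 := qfac_ne_zero n
    have h2 := qfac_ne_zero k
    have h3 := qfac_ne_zero (n-k-1)
    have h4 : (1 - (RatFunc.X : RatFunc ℚ)^(k+1)) ≠ 0 := by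
      have := qfac_ne_zero (k+1); rw [qfac_succ] at this; exact right_ne_zero_of_mul this
    have h5 : (1 - (RatFunc.X : RatFunc ℚ)^(n-k)) ≠ 0 := by
      have := qfac_ne_zero (n-k); rw [hs3] at this; exact right_ne_zero_of_mul this
    field_simp
    ring

lemma aeval_gb (n k : ℕ) :
    Polynomial.aeval (RatFunc.X : RatFunc ℚ) (gb n k) = qbinom n k := by
  induction n generalizing k with
  | zero =>
    match k with
    | 0 => simp only [gb]; rw [map_one, qbinom_zero]
    | k+1 => simp only [gb]; rw [map_zero, qbinom_eq_zero (Nat.succ_pos k)]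
  | succ n ih =>
    match k with
    | 0 => simp only [gb]; rw [map_one, qbinom_zero]
    | k+1 =>
      simp only [gb]; rw [map_add, map_mul, map_pow, Polynomial.aeval_X, ih, ih, qbinom_pascal]
      ring

/-- The multinomial coefficient as an integer polynomial. -/
noncomputable def mpoly (j i k : ℕ) : Polynomial ℤ :=
  if i ≤ j ∧ k ≤ j ∧ j ≤ i + k then gb j (j-i) * gb i (j-k) else 0

lemma aeval_mpoly (j i k : ℕ) :
    Polynomial.aeval (RatFunc.X : RatFunc ℚ) (mpoly j i k) = qmulti j i k := by
  rw [mpoly, qmulti]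
  split
  · next h =>
    obtain ⟨h1, h2, h3⟩ := h
    rw [map_mul, aeval_gb, aeval_gb]
    rw [qbinom, if_pos (by omega), qbinom, if_pos (by omega)]
    have e1 : j - (j - i) = i := by omega
    have e2 : i - (j - k) = i + k - j := by omega
    rw [e1, e2]
    have a1 := qfac_ne_zero i
    have a2 := qfac_ne_zero (j-i)
    have a3 := qfac_ne_zero (j-k)
    have a4 := qfac_ne_zero (i+k-j)
    field_simp
  · rw [map_zero]

/-- Triangular numbers. -/
def tri : ℕ → ℕ
  | 0 => 0
  | n+1 => tri n + (n+1)

/-- The coefficient in the bilinear expansion, as an element of `ℚ(q)`. -/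
noncomputable def cR (i k j : ℕ) : RatFunc ℚ :=
  (-1)^(i+k-j) * (RatFunc.X : RatFunc ℚ)^(tri (i+k-j)) * qmulti j i k

/-- The coefficient in the bilinear expansion, as an integer polynomial. -/
noncomputable def cpoly (i k j : ℕ) : Polynomial ℤ :=
  (-1)^(i+k-j) * Polynomial.X^(tri (i+k-j)) * mpoly j i k

lemma aeval_cpoly (i k j : ℕ) :
    Polynomial.aeval (RatFunc.X : RatFunc ℚ) (cpoly i k j) = cR i k j := by
  rw [cpoly, cR, map_mul, map_mul, map_pow, map_pow, Polynomial.aeval_X, aeval_mpoly]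
  norm_num

lemma cR_eq_zero {i k j : ℕ} (h : i + k < j) : cR i k j = 0 := by
  rw [cR, qmulti, if_neg (by omega), mul_zero]

lemma cR_rec (i k j : ℕ) :
    (1 - (RatFunc.X : RatFunc ℚ)^(k+1)) * cR i (k+1) j =
      (if 1 ≤ j then cR i k (j-1) * (1 - (RatFunc.X : RatFunc ℚ)^j) else 0) +
      ((RatFunc.X : RatFunc ℚ)^(j+1) - (RatFunc.X : RatFunc ℚ)^(k+1)) * cR i k j := by
  match j with
  | 0 =>
    rw [if_neg (by omega)]
    have h0 : cR i (k+1) 0 = 0 := by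
      rw [cR, qmulti, if_neg (by omega), mul_zero]
    rw [h0, mul_zero, zero_add]
    by_cases hik : i = 0 ∧ k = 0
    · obtain ⟨hi, hk⟩ := hik; subst hi; subst hk
      norm_num
    · rw [cR, qmulti, if_neg (by omega), mul_zero, mul_zero]
  | j+1 =>
    rw [if_pos (by omega)]
    simp only [Nat.add_sub_cancel]
    by_cases hA : i ≤ j+1 ∧ k ≤ j ∧ j ≤ i+k
    · obtain ⟨hA1, hA2, hA3⟩ := hA
      by_cases hB : i ≤ j
      · by_cases hC : j+1 ≤ i+k
        · obtain ⟨a, b, c, hi, hk, hj⟩ :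
              ∃ a b c, i = b+c+1 ∧ k = a+c+1 ∧ j = a+b+c+1 :=
            ⟨j-i, j-k, i+k-j-1, by omega, by omega, by omega⟩
          subst hi hk hj
          rw [cR, cR, cR, qmulti, if_pos (by omega), qmulti, if_pos (by omega),
            qmulti, if_pos (by omega)]
          simp only [show b + c + 1 + (a + c + 1 + 1) - (a + b + c + 1 + 1) = c + 1 from by omega,
            show a + b + c + 1 + 1 - (b + c + 1) = a + 1 from by omega,
            show a + b + c + 1 + 1 - (a + c + 1 + 1) = b from by omega,
            show b + c + 1 + (a + c + 1) - (a + b + c + 1) = c + 1 from by omega,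
            show a + b + c + 1 - (b + c + 1) = a from by omega,
            show a + b + c + 1 - (a + c + 1) = b from by omega,
            show b + c + 1 + (a + c + 1) - (a + b + c + 1 + 1) = c from by omega,
            show a + b + c + 1 + 1 - (a + c + 1) = b + 1 from by omega]
          have n1 := qfac_ne_zero a
          have n2 := qfac_ne_zero b
          have n3 := qfac_ne_zero c
          have n4 := qfac_ne_zero (a+1)
          have n5 := qfac_ne_zero (b+1)
          have n6 := qfac_ne_zero (c+1)
          have d1 : qfac (a+1) * qfac b * qfac (c+1) ≠ 0 :=
            mul_ne_zero (mul_ne_zero n4 n2) n6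
          have d2 : qfac a * qfac b * qfac (c+1) ≠ 0 :=
            mul_ne_zero (mul_ne_zero n1 n2) n6
          have d3 : qfac (a+1) * qfac (b+1) * qfac c ≠ 0 :=
            mul_ne_zero (mul_ne_zero n4 n5) n3
          simp only [mul_div_assoc', div_mul_eq_mul_div]
          rw [div_add_div _ _ d2 d3, div_eq_div_iff d1 (mul_ne_zero d2 d3)]
          rw [qfac_succ (a+b+c+1), qfac_succ a, qfac_succ b, qfac_succ c]
          simp only [tri]
          ring
        · have hj : j = i + k := by omega
          subst hj
          rw [cR, cR, cR, qmulti, if_pos (by omega), qmulti, if_pos (by omega),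
            qmulti, if_neg (by omega)]
          simp only [show i + (k+1) - (i+k+1) = 0 from by omega,
            show i + k + 1 - i = k + 1 from by omega,
            show i + k + 1 - (k+1) = i from by omega,
            show i + k - (i + k) = 0 from by omega,
            show i + k - i = k from by omega,
            show i + k - k = i from by omega]
          have n1 := qfac_ne_zero i
          have n2 := qfac_ne_zero k
          have n3 := qfac_ne_zero (k+1)
          have d1 : qfac (k+1) * qfac i * qfac 0 ≠ 0 :=
            mul_ne_zero (mul_ne_zero n3 n1) (qfac_ne_zero 0)
          have d2 : qfac k * qfac i * qfac 0 ≠ 0 :=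
            mul_ne_zero (mul_ne_zero n2 n1) (qfac_ne_zero 0)
          rw [mul_zero, mul_zero, add_zero]
          simp only [mul_div_assoc', div_mul_eq_mul_div]
          rw [div_eq_div_iff d1 d2]
          rw [qfac_succ (i+k), qfac_succ k]
          simp only [tri, qfac, Finset.range_zero, Finset.prod_empty]
          ring
      · have hi : i = j+1 := by omega
        obtain ⟨m, hm⟩ : ∃ m, j = k + m := ⟨j - k, by omega⟩
        subst hi
        subst hm
        rw [cR, cR, cR, qmulti, if_pos (by omega), qmulti, if_neg (by omega),
          qmulti, if_pos (by omega)]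
        simp only [show k + m + 1 + (k + 1) - (k + m + 1) = k + 1 from by omega,
          show k + m + 1 - (k + m + 1) = 0 from by omega,
          show k + m + 1 - (k + 1) = m from by omega,
          show k + m + 1 + k - (k + m + 1) = k from by omega,
          show k + m + 1 - k = m + 1 from by omega]
        have n1 := qfac_ne_zero m
        have n2 := qfac_ne_zero k
        have d1 : qfac 0 * qfac m * qfac (k+1) ≠ 0 :=
          mul_ne_zero (mul_ne_zero (qfac_ne_zero 0) n1) (qfac_ne_zero (k+1))
        have d2 : qfac 0 * qfac (m+1) * qfac k ≠ 0 :=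
          mul_ne_zero (mul_ne_zero (qfac_ne_zero 0) (qfac_ne_zero (m+1))) n2
        simp only [mul_div_assoc', div_mul_eq_mul_div]
        rw [mul_zero, zero_mul, zero_add, div_eq_div_iff d1 d2]
        rw [qfac_succ m, qfac_succ k]
        simp only [tri, qfac, Finset.range_zero, Finset.prod_empty]
        ring
    · have h0 : cR i (k+1) (j+1) = 0 := by
        rw [cR, qmulti, if_neg (by omega), mul_zero]
      have h1 : cR i k j = 0 := by
        rw [cR, qmulti, if_neg (by omega), mul_zero]
      rw [h0, h1, mul_zero, zero_mul, zero_add]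
      by_cases hC : i ≤ j+1 ∧ k ≤ j+1 ∧ j+1 ≤ i+k
      · have hk : k = j+1 := by omega
        subst hk
        rw [sub_self, zero_mul]
      · rw [cR, qmulti, if_neg (by omega), mul_zero, mul_zero]

lemma key_rel (n j : ℕ) :
    (1 - (RatFunc.X : RatFunc ℚ)^(j+1)) * qbinom (n+(j+1)) (j+1) =
      (1 - (RatFunc.X : RatFunc ℚ)^n * (RatFunc.X : RatFunc ℚ)^(j+1)) * qbinom (n+j) j := by
  rw [qbinom, if_pos (by omega), qbinom, if_pos (by omega)]
  have e1 : n + (j+1) - (j+1) = n := by omega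
  have e2 : n + j - j = n := by omega
  rw [e1, e2, show n + (j+1) = (n+j)+1 from by omega, qfac_succ (n+j), qfac_succ j]
  have hx : (RatFunc.X : RatFunc ℚ)^(n+j+1) = RatFunc.X^n * RatFunc.X^(j+1) := by
    rw [← pow_add]
    rfl
  rw [hx]
  have n1 := qfac_ne_zero n
  have n2 := qfac_ne_zero j
  have n3 := one_sub_X_pow_ne_zero (j+1) (by omega)
  have d1 : qfac j * (1 - (RatFunc.X : RatFunc ℚ)^(j+1)) * qfac n ≠ 0 :=
    mul_ne_zero (mul_ne_zero n2 n3) n1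
  have d2 : qfac j * qfac n ≠ 0 := mul_ne_zero n2 n1
  simp only [mul_div_assoc', div_mul_eq_mul_div]
  rw [div_eq_div_iff d1 d2]
  ring

lemma cR_zero_term (i k : ℕ) :
    ((RatFunc.X : RatFunc ℚ)^(0+1) - (RatFunc.X : RatFunc ℚ)^(k+1)) * cR i k 0 = 0 := by
  by_cases h : i = 0 ∧ k = 0
  · obtain ⟨h1, h2⟩ := h; subst h1; subst h2; rw [sub_self, zero_mul]
  · rw [cR, qmulti, if_neg (by omega), mul_zero, mul_zero]

lemma bilinear (i k n : ℕ) :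
    qbinom (n+i) i * qbinom (n+k) k =
      ∑ j ∈ Finset.range (i+k+1),
        (RatFunc.X : RatFunc ℚ)^((i+k-j)*n) * cR i k j * qbinom (n+j) j := by
  induction k with
  | zero =>
    rw [Finset.sum_eq_single_of_mem i (Finset.mem_range.mpr (by omega))]
    · have h1 : cR i 0 i = 1 := by
        rw [cR, qmulti, if_pos (by omega)]
        rw [show i + 0 - i = 0 from by omega, show i - i = 0 from by omega,
          show i - 0 = i from rfl, show qfac 0 = 1 from rfl]
        rw [one_mul, mul_one, div_self (qfac_ne_zero i)]
        simp [tri]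
      rw [qbinom_zero, mul_one, h1, show i + 0 - i = 0 from by omega]
      simp
    · intro j hj hji
      rw [cR, qmulti, if_neg (by omega)]
      simp
  | succ k ih =>
    have hc := one_sub_X_pow_ne_zero (k+1) (by omega)
    apply mul_left_cancel₀ hc
    have hF : ∀ j, qbinom (n+j) j =
        (1 - (RatFunc.X : RatFunc ℚ)^(j+1)) * qbinom (n+(j+1)) (j+1) +
          (RatFunc.X : RatFunc ℚ)^n * RatFunc.X^(j+1) * qbinom (n+j) j := by
      intro j
      have := key_rel n j
      linear_combination -this
    have step1 : (1 - (RatFunc.X : RatFunc ℚ)^(k+1)) *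
        (qbinom (n+i) i * qbinom (n+(k+1)) (k+1)) =
        ∑ j ∈ Finset.range (i+k+1),
          ((RatFunc.X : RatFunc ℚ)^((i+k-j)*n) * cR i k j *
              ((1 - RatFunc.X^(j+1)) * qbinom (n+(j+1)) (j+1)) +
            (RatFunc.X : RatFunc ℚ)^((i+k+1-j)*n) *
              ((RatFunc.X^(j+1) - RatFunc.X^(k+1)) * cR i k j) * qbinom (n+j) j) := by
      have l1 : (1 - (RatFunc.X : RatFunc ℚ)^(k+1)) *
          (qbinom (n+i) i * qbinom (n+(k+1)) (k+1)) =
          (1 - RatFunc.X^n * RatFunc.X^(k+1)) * (qbinom (n+i) i * qbinom (n+k) k) := by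
        have := key_rel n k
        linear_combination qbinom (n+i) i * this
      rw [l1, ih, Finset.mul_sum]
      apply Finset.sum_congr rfl
      intro j hj
      have hjr : j ≤ i + k := by
        have := Finset.mem_range.mp hj; omega
      have hexp : (RatFunc.X : RatFunc ℚ)^((i+k+1-j)*n) =
          RatFunc.X^((i+k-j)*n) * RatFunc.X^n := by
        rw [← pow_add]; congr 1
        have : (i+k-j)*n + n = (i+k-j+1)*n := by ring
        rw [this]; congr 1; omega
      rw [hexp]
      have hFj := hF j
      linear_combination ((RatFunc.X : RatFunc ℚ)^((i+k-j)*n) * cR i k j) * hFj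
    rw [step1, Finset.sum_add_distrib]
    set g : ℕ → RatFunc ℚ := fun j =>
      (RatFunc.X : RatFunc ℚ)^((i+k+1-j)*n) *
        ((RatFunc.X^(j+1) - RatFunc.X^(k+1)) * cR i k j) * qbinom (n+j) j with hg
    have sum2 : ∑ j ∈ Finset.range (i+k+1), g j =
        ∑ j ∈ Finset.range (i+k+1),
          (RatFunc.X : RatFunc ℚ)^((i+k-j)*n) *
            ((RatFunc.X^(j+1+1) - RatFunc.X^(k+1)) * cR i k (j+1)) * qbinom (n+(j+1)) (j+1) := by
      have e1 : ∑ j ∈ Finset.range (i+k+1+1), g j = ∑ j ∈ Finset.range (i+k+1), g j := by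
        rw [Finset.sum_range_succ]
        rw [show g (i+k+1) = 0 from by
          simp only [hg]
          rw [cR_eq_zero (by omega), mul_zero, mul_zero, zero_mul]]
        rw [add_zero]
      have e2 : ∑ j ∈ Finset.range (i+k+1+1), g j =
          (∑ j ∈ Finset.range (i+k+1), g (j+1)) + g 0 := Finset.sum_range_succ' g (i+k+1)
      rw [← e1, e2]
      rw [show g 0 = 0 from by
        simp only [hg]
        rw [cR_zero_term i k, mul_zero, zero_mul]]
      rw [add_zero]
      apply Finset.sum_congr rfl
      intro j hj
      have hjr : j ≤ i + k := by have := Finset.mem_range.mp hj; omega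
      simp only [hg]
      rw [show i+k+1-(j+1) = i+k-j from by omega]
    rw [sum2, ← Finset.sum_add_distrib]
    rw [Finset.mul_sum]
    rw [show i+(k+1)+1 = i+k+1+1 from by omega]
    rw [Finset.sum_range_succ' (fun j => (1 - (RatFunc.X : RatFunc ℚ)^(k+1)) *
      ((RatFunc.X : RatFunc ℚ)^((i+(k+1)-j)*n) * cR i (k+1) j * qbinom (n+j) j)) (i+k+1)]
    rw [show (1 - (RatFunc.X : RatFunc ℚ)^(k+1)) *
        ((RatFunc.X : RatFunc ℚ)^((i+(k+1)-0)*n) * cR i (k+1) 0 * qbinom (n+0) 0) = 0 from by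
      rw [cR, qmulti, if_neg (by omega), mul_zero, mul_zero, zero_mul, mul_zero]]
    rw [add_zero]
    apply Finset.sum_congr rfl
    intro j hj
    have hjr : j ≤ i + k := by have := Finset.mem_range.mp hj; omega
    have hrec := cR_rec i k (j+1)
    rw [if_pos (by omega), Nat.add_sub_cancel] at hrec
    rw [show i+(k+1)-(j+1) = i+k-j from by omega]
    linear_combination (-(RatFunc.X : RatFunc ℚ)^((i+k-j)*n) * qbinom (n+(j+1)) (j+1)) * hrec

/-- $q$-analog of Statement 8: the coefficients are `q^{(rk-j)n}` times
polynomials in `q` with integer coefficients. -/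
theorem stmt_15 (k r : ℕ) (hr : 1 ≤ r) :
    ∃ P : ℕ → Polynomial ℤ, ∀ n : ℕ,
      (qbinom (n + k) k) ^ r =
        ∑ j ∈ Finset.range (r * k + 1),
          (RatFunc.X : RatFunc ℚ) ^ ((r * k - j) * n) *
            Polynomial.aeval (RatFunc.X : RatFunc ℚ) (P j) * qbinom (n + j) j := by
  induction r, hr using Nat.le_induction with
  | base =>
    refine ⟨fun j => if j = k then 1 else 0, fun n => ?_⟩
    simp only [one_mul, pow_one]
    rw [Finset.sum_eq_single_of_mem k (Finset.mem_range.mpr (by omega))]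
    · rw [if_pos rfl, map_one, mul_one, show k - k = 0 from by omega]
      simp
    · intro j hj hjk
      rw [if_neg hjk, map_zero, mul_zero, zero_mul]
  | succ r hr ih =>
    obtain ⟨P, hP⟩ := ih
    refine ⟨fun j => ∑ i ∈ Finset.range (r*k+1), P i * cpoly i k j, fun n => ?_⟩
    simp only [show (r+1)*k = r*k + k from by ring]
    rw [pow_succ, hP n, Finset.sum_mul]
    have step1 : ∀ i ∈ Finset.range (r*k+1),
        (RatFunc.X : RatFunc ℚ)^((r*k-i)*n) * Polynomial.aeval (RatFunc.X : RatFunc ℚ) (P i) *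
            qbinom (n+i) i * qbinom (n+k) k =
          ∑ j ∈ Finset.range (r*k+k+1),
            (RatFunc.X : RatFunc ℚ)^((r*k-i)*n) * Polynomial.aeval (RatFunc.X : RatFunc ℚ) (P i) *
              ((RatFunc.X : RatFunc ℚ)^((i+k-j)*n) * cR i k j * qbinom (n+j) j) := by
      intro i hi
      have hir : i ≤ r*k := by have := Finset.mem_range.mp hi; omega
      rw [mul_assoc, bilinear i k n, Finset.mul_sum]
      apply Finset.sum_subset
      · intro x hx
        rw [Finset.mem_range] at hx ⊢
        omega
      · intro x hx hxn
        rw [Finset.mem_range] at hxn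
        rw [cR_eq_zero (by omega), mul_zero, zero_mul, mul_zero]
    rw [Finset.sum_congr rfl step1, Finset.sum_comm]
    apply Finset.sum_congr rfl
    intro j hj
    have hjr : j ≤ r*k + k := by have := Finset.mem_range.mp hj; omega
    rw [map_sum, Finset.mul_sum, Finset.sum_mul]
    apply Finset.sum_congr rfl
    intro i hi
    have hir : i ≤ r*k := by have := Finset.mem_range.mp hi; omega
    rw [map_mul, aeval_cpoly]
    by_cases hik : j ≤ i + k
    · have hexp : (RatFunc.X : RatFunc ℚ)^((r*k+k-j)*n) =
          RatFunc.X^((r*k-i)*n) * RatFunc.X^((i+k-j)*n) := by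
        rw [← pow_add]
        congr 1
        have h1 : (r*k-i)*n + (i+k-j)*n = ((r*k-i) + (i+k-j))*n := by ring
        rw [h1]
        congr 1
        omega
      rw [hexp]
      ring
    · rw [cR_eq_zero (by omega)]
      ring
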